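/- For every convex cone H ⊆ ℝ^ℓ with ℝ^ℓ_+ \ {0} ⊆ int H, there exists K > 0 with D^K ⊆ int H. -/

import Mathlib

/-- For every convex cone H with ℝ^ℓ_+ \ {0} ⊆ int H there is K > 0 with D^K ⊆ int H. -/
theorem stmt_8 (ℓ : ℕ) (hℓ : 2 ≤ ℓ) (H : Set (Fin ℓ → ℝ))
    (hconv : Convex ℝ H) (hcone : ∀ l : ℝ, 0 ≤ l → ∀ c ∈ H, l • c ∈ H)
    (hint : {y : Fin ℓ → ℝ | ∀ j, 0 ≤ y j} \ {0} ⊆ interior H) :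
    ∃ K : ℝ, 0 < K ∧
      {y : Fin ℓ → ℝ | ∃ i : Fin ℓ, 0 < y i ∧ ∀ j, j ≠ i → 0 < y i + K * y j} ⊆
        interior H := by
  -- H is closed under addition
  have hHH : ∀ a ∈ H, ∀ b ∈ H, a + b ∈ H := by
    intro a ha b hb
    have h2 : (1/2 : ℝ) • a + (1/2 : ℝ) • b ∈ H :=
      hconv ha hb (by norm_num) (by norm_num) (by norm_num)
    have := hcone 2 (by norm_num) _ h2
    have heq : (2:ℝ) • ((1/2 : ℝ) • a + (1/2 : ℝ) • b) = a + b := by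
      rw [smul_add, smul_smul, smul_smul]; norm_num
    rwa [heq] at this
  -- interior H + H ⊆ interior H
  have hintadd : ∀ a ∈ interior H, ∀ b ∈ H, a + b ∈ interior H := by
    intro a ha b hb
    have hopen : IsOpen ((· + b) '' interior H) := (isOpenMap_add_right b) _ isOpen_interior
    have hsub : (· + b) '' interior H ⊆ H := by
      rintro _ ⟨x, hx, rfl⟩
      exact hHH x (interior_subset hx) b hb
    exact interior_maximal hsub hopen ⟨a, ha, rfl⟩
  -- each e_i is in the interior, with a ball
  have hei : ∀ i : Fin ℓ, ∃ ε > 0, Metric.ball (Pi.single i (1:ℝ)) ε ⊆ interior H := by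
    intro i
    have hmem : Pi.single i (1:ℝ) ∈ interior H := by
      apply hint
      constructor
      · intro j
        simp only [Set.mem_setOf_eq, Pi.single_apply]
        split <;> norm_num
      · simp only [Set.mem_singleton_iff]
        intro h
        have := congrFun h i
        simp at this
    exact Metric.isOpen_iff.mp isOpen_interior _ hmem
  choose εf hεf hball using hei
  have hne : (Finset.univ : Finset (Fin ℓ)).Nonempty :=
    ⟨⟨0, by omega⟩, Finset.mem_univ _⟩
  set ε : ℝ := Finset.univ.inf' hne εf with hεdef
  have hε : 0 < ε := by
    rw [hεdef, Finset.lt_inf'_iff]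
    intro b _
    exact hεf b
  have hεle : ∀ i : Fin ℓ, ε ≤ εf i := fun i =>
    Finset.inf'_le _ (Finset.mem_univ i)
  refine ⟨4/ε, by positivity, ?_⟩
  intro y hy
  obtain ⟨i, hyi, hj⟩ := hy
  set K : ℝ := 4/ε with hKdef
  have hK : 0 < K := by positivity
  -- decompose y = u + v
  set u : Fin ℓ → ℝ := fun j => if j = i then y i / 2 else max (y j) 0 with hu
  set z : Fin ℓ → ℝ := fun j => if j = i then 1 else (2 / y i) * min (y j) 0 with hz
  have hyuv : y = u + (y i / 2) • z := by
    funext j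
    simp only [hu, hz, Pi.add_apply, Pi.smul_apply, smul_eq_mul]
    by_cases hji : j = i
    · subst hji; simp
    · simp only [if_neg hji]
      have : y i / 2 * (2 / y i * min (y j) 0) = min (y j) 0 := by
        field_simp
      rw [this]
      rcases le_total (y j) 0 with h | h
      · rw [max_eq_right h, min_eq_left h]; ring
      · rw [max_eq_left h, min_eq_right h]; ring
  -- u ∈ interior H
  have hu_mem : u ∈ interior H := by
    apply hint
    constructor
    · intro j
      simp only [hu, Set.mem_setOf_eq]
      split
      · linarith
      · exact le_max_right _ _
    · simp only [Set.mem_singleton_iff]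
      intro h
      have := congrFun h i
      simp [hu] at this
      linarith
  -- z ∈ ball (e_i) (εf i)
  have hz_mem : z ∈ Metric.ball (Pi.single i (1:ℝ)) (εf i) := by
    rw [mem_ball_iff_norm]
    rw [pi_norm_lt_iff (hεf i)]
    intro j
    simp only [Pi.sub_apply, hz, Pi.single_apply]
    by_cases hji : j = i
    · simp [hji, hεf i]
    · simp only [if_neg hji]
      rw [sub_zero, Real.norm_eq_abs]
      have hεi := hεle i
      rcases le_total (y j) 0 with h | h
      · rw [min_eq_left h]
        have hyj : 0 < y i + K * y j := hj j hji
        have h1 : 2 / y i * y j ≤ 0 := by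
          apply mul_nonpos_of_nonneg_of_nonpos _ h
          positivity
        rw [abs_of_nonpos h1]
        -- -(2/y i * y j) < εf i;  y j > - y i / K
        have h2 : -y j < y i / K := by
          rw [lt_div_iff₀ hK]; nlinarith
        have h3 : -(2 / y i * y j) = (2 / y i) * (-y j) := by ring
        rw [h3]
        have h4 : (2 / y i) * (-y j) < (2 / y i) * (y i / K) := by
          apply mul_lt_mul_of_pos_left h2 (by positivity)
        have h5 : (2 / y i) * (y i / K) = 2 / K := by
          field_simp
        have h6 : 2 / K = ε / 2 := by
          rw [hKdef]; field_simp; ring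
        calc (2 / y i) * (-y j) < 2 / K := by rw [← h5]; exact h4
          _ = ε / 2 := h6
          _ < ε := by linarith
          _ ≤ εf i := hεi
      · rw [min_eq_right h]
        simp only [mul_zero, abs_zero]
        exact hεf i
  -- v ∈ H
  have hv_mem : (y i / 2) • z ∈ H :=
    hcone _ (by positivity) _ (interior_subset (hball i hz_mem))
  rw [hyuv]
  exact hintadd u hu_mem _ hv_mem
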